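/- Let P ∈ ℝ^{m×(L+1)p} satisfy P · I_L = [I_m, 0], and define Ã := A − B P O_L. Let X_z ∈ ℝ^{n×r} have full column rank with column space equal to the output-nulling subspace V₀, and let A_z ∈ ℝ^{r×r} satisfy Ã X_z = X_z A_z. Then every complex eigenvalue λ of A_z is an invariant zero of the system: rank over ℂ of the Rosenbrock matrix [A − λI, B; C, D] is strictly less than n + m. Specifically, for an eigenvector α of A_z with eigenvalue λ, the pair ξ := X_z α ≠ 0 and μ := −P O_L ξ satisfies (A − λI) ξ + B μ = 0 and C ξ + D μ = 0. -/

import Mathlib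

open Matrix

/-- Block observability matrix `O_L` with block rows `C A^k`, `k = 0,…,L`. -/
noncomputable def obsMat {n p : ℕ} (A : Matrix (Fin n) (Fin n) ℝ)
    (C : Matrix (Fin p) (Fin n) ℝ) (L : ℕ) :
    Matrix (Fin (L + 1) × Fin p) (Fin n) ℝ :=
  fun kr j => (C * A ^ (kr.1 : ℕ)) kr.2 j

/-- Block invertibility (Toeplitz) matrix `I_L` of the LTI system `(A,B,C,D)`. -/
noncomputable def invMat {n m p : ℕ} (A : Matrix (Fin n) (Fin n) ℝ)
    (B : Matrix (Fin n) (Fin m) ℝ) (C : Matrix (Fin p) (Fin n) ℝ)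
    (D : Matrix (Fin p) (Fin m) ℝ) (L : ℕ) :
    Matrix (Fin (L + 1) × Fin p) (Fin (L + 1) × Fin m) ℝ :=
  fun jr ic =>
    if (jr.1 : ℕ) = (ic.1 : ℕ) then D jr.2 ic.2
    else if (ic.1 : ℕ) < (jr.1 : ℕ) then
      (C * A ^ ((jr.1 : ℕ) - (ic.1 : ℕ) - 1) * B) jr.2 ic.2
    else 0

/-- The block matrix `[I_m, 0] ∈ ℝ^{m × (L+1)m}`. -/
noncomputable def idZero (m L : ℕ) : Matrix (Fin m) (Fin (L + 1) × Fin m) ℝ :=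
  fun r ic => if (ic.1 : ℕ) = 0 ∧ r = ic.2 then 1 else 0

/-- The state sequence of `x_{k+1} = A x_k + B u_k` from initial state `ξ`. -/
noncomputable def stateSeq {n m : ℕ} (A : Matrix (Fin n) (Fin n) ℝ)
    (B : Matrix (Fin n) (Fin m) ℝ) (ξ : Fin n → ℝ) (u : ℕ → Fin m → ℝ) :
    ℕ → Fin n → ℝ
  | 0 => ξ
  | k + 1 => A.mulVec (stateSeq A B ξ u k) + B.mulVec (u k)

/-- The output-nulling subspace `V₀`: states from which some input sequence keeps the
output `y_k = C x_k + D u_k` identically zero. -/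
def outputNulling {n m p : ℕ} (A : Matrix (Fin n) (Fin n) ℝ)
    (B : Matrix (Fin n) (Fin m) ℝ) (C : Matrix (Fin p) (Fin n) ℝ)
    (D : Matrix (Fin p) (Fin m) ℝ) : Set (Fin n → ℝ) :=
  {ξ | ∃ u : ℕ → Fin m → ℝ, ∀ k, C.mulVec (stateSeq A B ξ u k) + D.mulVec (u k) = 0}

/-- The Rosenbrock matrix `[A - zI, B; C, D] ∈ ℂ^{(n+p) × (n+m)}`. -/
noncomputable def rosenbrock {n m p : ℕ} (A : Matrix (Fin n) (Fin n) ℝ)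
    (B : Matrix (Fin n) (Fin m) ℝ) (C : Matrix (Fin p) (Fin n) ℝ)
    (D : Matrix (Fin p) (Fin m) ℝ) (z : ℂ) :
    Matrix (Fin n ⊕ Fin p) (Fin n ⊕ Fin m) ℂ :=
  Matrix.fromBlocks (A.map Complex.ofReal - z • 1) (B.map Complex.ofReal)
    (C.map Complex.ofReal) (D.map Complex.ofReal)

section AuxLemmas

open Matrix

private lemma matExt' {a b : ℕ} {M N : Matrix (Fin a) (Fin b) ℝ}
    (h : ∀ w, M.mulVec w = N.mulVec w) : M = N := by
  ext i j
  have := congrFun (h (Pi.single j 1)) i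
  simpa [Matrix.mulVec_single] using this

private lemma mapMulC {a b c : ℕ} (M : Matrix (Fin a) (Fin b) ℝ) (N : Matrix (Fin b) (Fin c) ℝ) :
    (M * N).map Complex.ofReal = M.map Complex.ofReal * N.map Complex.ofReal :=
  Matrix.map_mul (f := Complex.ofRealHom)

private lemma mapSubC {a b : ℕ} (M N : Matrix (Fin a) (Fin b) ℝ) :
    (M - N).map Complex.ofReal = M.map Complex.ofReal - N.map Complex.ofReal := by
  ext i j; simp

private lemma stateSeq_eq {n m : ℕ} (A : Matrix (Fin n) (Fin n) ℝ)
    (B : Matrix (Fin n) (Fin m) ℝ) (ξ : Fin n → ℝ) (u : ℕ → Fin m → ℝ) (k : ℕ) :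
    stateSeq A B ξ u k =
      (A ^ k).mulVec ξ + ∑ i ∈ Finset.range k, (A ^ (k - 1 - i) * B).mulVec (u i) := by
  induction k with
  | zero => simp [stateSeq]
  | succ k ih =>
    have e1 : stateSeq A B ξ u (k + 1)
        = A.mulVec (stateSeq A B ξ u k) + B.mulVec (u k) := rfl
    have hsum : A.mulVec (∑ i ∈ Finset.range k, (A ^ (k - 1 - i) * B).mulVec (u i))
        = ∑ i ∈ Finset.range k, A.mulVec ((A ^ (k - 1 - i) * B).mulVec (u i)) := by
      simpa only [Matrix.mulVecLin_apply] using map_sum A.mulVecLin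
        (fun i => (A ^ (k - 1 - i) * B).mulVec (u i)) (Finset.range k)
    rw [e1, ih, Matrix.mulVec_add, hsum, Finset.sum_range_succ]
    have e2 : A.mulVec ((A ^ k).mulVec ξ) = (A ^ (k + 1)).mulVec ξ := by
      rw [Matrix.mulVec_mulVec, ← pow_succ']
    have e3 : ∀ i ∈ Finset.range k,
        A.mulVec ((A ^ (k - 1 - i) * B).mulVec (u i)) = (A ^ (k + 1 - 1 - i) * B).mulVec (u i) := by
      intro i hi
      simp only [Finset.mem_range] at hi
      have he : k + 1 - 1 - i = (k - 1 - i) + 1 := by omega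
      rw [Matrix.mulVec_mulVec, he, pow_succ', Matrix.mul_assoc]
    have e4 : (A ^ (k + 1 - 1 - k) * B).mulVec (u k) = B.mulVec (u k) := by
      have : k + 1 - 1 - k = 0 := by omega
      rw [this]; simp
    rw [e2, Finset.sum_congr rfl e3, e4]
    abel

private lemma output_block {n m p L : ℕ} (A : Matrix (Fin n) (Fin n) ℝ)
    (B : Matrix (Fin n) (Fin m) ℝ) (C : Matrix (Fin p) (Fin n) ℝ)
    (D : Matrix (Fin p) (Fin m) ℝ) (ξ : Fin n → ℝ) (u : ℕ → Fin m → ℝ)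
    (hu : ∀ k, C.mulVec (stateSeq A B ξ u k) + D.mulVec (u k) = 0) :
    (obsMat A C L).mulVec ξ
      + (invMat A B C D L).mulVec (fun ic => u ic.1 ic.2) = 0 := by
  funext kr
  obtain ⟨k, row⟩ := kr
  have hobs : (obsMat A C L).mulVec ξ (k, row) = ((C * A ^ (k : ℕ)).mulVec ξ) row := rfl
  have inner : ∀ i : Fin (L + 1),
      (∑ c : Fin m, invMat A B C D L (k, row) (i, c) * u i c)
      = (if (k : ℕ) = (i : ℕ) then (D.mulVec (u i)) row else 0)
        + (if (i : ℕ) < (k : ℕ)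
            then ((C * A ^ ((k : ℕ) - 1 - (i : ℕ)) * B).mulVec (u i)) row else 0) := by
    intro i
    have hexp : (k : ℕ) - (i : ℕ) - 1 = (k : ℕ) - 1 - (i : ℕ) := by omega
    by_cases h1 : (k : ℕ) = (i : ℕ)
    · have h2 : ¬ (i : ℕ) < (k : ℕ) := by omega
      simp [invMat, h1, h2, Matrix.mulVec, dotProduct]
    · by_cases h2 : (i : ℕ) < (k : ℕ)
      · simp [invMat, h1, h2, hexp, Matrix.mulVec, dotProduct]
      · simp [invMat, h1, h2]
  have hinv : (invMat A B C D L).mulVec (fun ic => u ic.1 ic.2) (k, row)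
      = (D.mulVec (u (k : ℕ))) row
        + ∑ i ∈ Finset.range (k : ℕ), ((C * A ^ ((k : ℕ) - 1 - i) * B).mulVec (u i)) row := by
    have expand : (invMat A B C D L).mulVec (fun ic => u ic.1 ic.2) (k, row)
        = ∑ i : Fin (L + 1), ∑ c : Fin m, invMat A B C D L (k, row) (i, c) * u i c := by
      simp [Matrix.mulVec, dotProduct, Fintype.sum_prod_type]
    rw [expand, Finset.sum_congr rfl (fun i _ => inner i), Finset.sum_add_distrib]
    congr 1
    · have : (∑ i : Fin (L + 1),
          if (k : ℕ) = (i : ℕ) then (D.mulVec (u i)) row else 0)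
          = ∑ j ∈ Finset.range (L + 1),
            (if (k : ℕ) = j then (D.mulVec (u j)) row else 0) :=
        Fin.sum_univ_eq_sum_range (fun j => if (k : ℕ) = j then (D.mulVec (u j)) row else 0) (L + 1)
      rw [this, Finset.sum_ite_eq]
      simp [Finset.mem_range, k.isLt]
    · have h1 : (∑ i : Fin (L + 1),
          if (i : ℕ) < (k : ℕ)
            then ((C * A ^ ((k : ℕ) - 1 - (i : ℕ)) * B).mulVec (u i)) row else 0)
          = ∑ j ∈ Finset.range (L + 1),
            (if j < (k : ℕ) then ((C * A ^ ((k : ℕ) - 1 - j) * B).mulVec (u j)) row else 0) :=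
        Fin.sum_univ_eq_sum_range (fun j => if j < (k : ℕ) then ((C * A ^ ((k : ℕ) - 1 - j) * B).mulVec (u j)) row else 0) (L + 1)
      rw [h1]
      rw [← Finset.sum_subset (Finset.range_subset_range.mpr (by omega : (k : ℕ) ≤ L + 1))
        (fun j _ hj => by
          simp only [Finset.mem_range] at hj
          simp [hj])]
      exact (Finset.sum_congr rfl (fun j hj => by
        simp [Finset.mem_range.mp hj])).symm
  have hy := congrFun (hu (k : ℕ)) row
  have hC : C.mulVec (stateSeq A B ξ u (k : ℕ)) row
      = ((C * A ^ (k : ℕ)).mulVec ξ) row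
        + ∑ i ∈ Finset.range (k : ℕ), ((C * A ^ ((k : ℕ) - 1 - i) * B).mulVec (u i)) row := by
    rw [stateSeq_eq, Matrix.mulVec_add]
    have hs : C.mulVec (∑ i ∈ Finset.range (k : ℕ), (A ^ ((k : ℕ) - 1 - i) * B).mulVec (u i))
        = ∑ i ∈ Finset.range (k : ℕ), C.mulVec ((A ^ ((k : ℕ) - 1 - i) * B).mulVec (u i)) := by
      simpa only [Matrix.mulVecLin_apply] using map_sum C.mulVecLin
        (fun i => (A ^ ((k : ℕ) - 1 - i) * B).mulVec (u i)) (Finset.range (k : ℕ))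
    simp [hs, Matrix.mulVec_mulVec, Matrix.mul_assoc, Finset.sum_apply]
  simp only [Pi.add_apply, Pi.zero_apply] at hy ⊢
  rw [hC] at hy
  rw [hobs, hinv]
  linarith

private lemma idZero_mulVec {m L : ℕ} (u : ℕ → Fin m → ℝ) :
    (idZero m L).mulVec (fun ic => u ic.1 ic.2) = u 0 := by
  funext s
  have expand : (idZero m L).mulVec (fun ic => u ic.1 ic.2) s
      = ∑ i : Fin (L + 1), ∑ c : Fin m, idZero m L s (i, c) * u i c := by
    simp [Matrix.mulVec, dotProduct, Fintype.sum_prod_type]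
  rw [expand]
  have inner : ∀ i : Fin (L + 1),
      (∑ c : Fin m, idZero m L s (i, c) * u i c)
        = if (i : ℕ) = 0 then u i s else 0 := by
    intro i
    by_cases hi : (i : ℕ) = 0
    · simp [idZero, hi, ite_mul, Finset.sum_ite_eq]
    · simp [idZero, hi]
  rw [Finset.sum_congr rfl (fun i _ => inner i)]
  have h1 : (∑ i : Fin (L + 1), if (i : ℕ) = 0 then u i s else 0)
      = ∑ j ∈ Finset.range (L + 1), (if j = 0 then u j s else 0) :=
    Fin.sum_univ_eq_sum_range (fun j => if j = 0 then u j s else 0) (L + 1)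
  rw [h1, Finset.sum_ite_eq']
  simp

private lemma nulling_rel {n m p L : ℕ} (A : Matrix (Fin n) (Fin n) ℝ)
    (B : Matrix (Fin n) (Fin m) ℝ) (C : Matrix (Fin p) (Fin n) ℝ)
    (D : Matrix (Fin p) (Fin m) ℝ) (P : Matrix (Fin m) (Fin (L + 1) × Fin p) ℝ)
    (hP : P * invMat A B C D L = idZero m L)
    (ξ : Fin n → ℝ) (hξ : ξ ∈ outputNulling A B C D) :
    C.mulVec ξ = D.mulVec ((P * obsMat A C L).mulVec ξ) := by
  obtain ⟨u, hu⟩ := hξ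
  have hblock := output_block (L := L) A B C D ξ u hu
  have h1 : (P * obsMat A C L).mulVec ξ
      + (P * invMat A B C D L).mulVec (fun ic => u ic.1 ic.2) = 0 := by
    rw [← Matrix.mulVec_mulVec, ← Matrix.mulVec_mulVec, ← Matrix.mulVec_add, hblock,
      Matrix.mulVec_zero]
  rw [hP, idZero_mulVec] at h1
  have h3 : (P * obsMat A C L).mulVec ξ = -(u 0) := eq_neg_of_add_eq_zero_left h1
  have h0 := hu 0
  have hst : stateSeq A B ξ u 0 = ξ := rfl
  rw [hst] at h0
  rw [h3, Matrix.mulVec_neg]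
  exact eq_neg_of_add_eq_zero_left h0

end AuxLemmas

section AuxLemmas2

open Matrix

private lemma mulVec_map_ne_zero {n r : ℕ} (Xz : Matrix (Fin n) (Fin r) ℝ)
    (hXzrank : Xz.rank = r) (α : Fin r → ℂ) (hα : α ≠ 0) :
    (Xz.map Complex.ofReal).mulVec α ≠ 0 := by
  have hrank : Xz.rank = Module.finrank ℝ (LinearMap.range Xz.mulVecLin) := rfl
  have h1 := LinearMap.finrank_range_add_finrank_ker Xz.mulVecLin
  rw [Module.finrank_fin_fun, ← hrank, hXzrank] at h1
  have hker : LinearMap.ker Xz.mulVecLin = ⊥ :=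
    Submodule.finrank_eq_zero.mp (by omega)
  have hinj : Function.Injective Xz.mulVecLin := LinearMap.ker_eq_bot.mp hker
  intro h0
  have hre : Xz.mulVec (fun j => (α j).re) = 0 := by
    funext i
    have h0i := congrFun h0 i
    have hre' : ((Xz.map Complex.ofReal).mulVec α i).re
        = Xz.mulVec (fun j => (α j).re) i := by
      simp [Matrix.mulVec, dotProduct, Complex.re_sum, Complex.re_ofReal_mul]
    rw [h0i] at hre'
    simpa using hre'.symm
  have him : Xz.mulVec (fun j => (α j).im) = 0 := by
    funext i
    have h0i := congrFun h0 i
    have him' : ((Xz.map Complex.ofReal).mulVec α i).im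
        = Xz.mulVec (fun j => (α j).im) i := by
      simp [Matrix.mulVec, dotProduct, Complex.im_sum, Complex.im_ofReal_mul]
    rw [h0i] at him'
    simpa using him'.symm
  have hre0 : (fun j => (α j).re) = (0 : Fin r → ℝ) := by
    apply hinj
    simp [Matrix.mulVecLin_apply, hre]
  have him0 : (fun j => (α j).im) = (0 : Fin r → ℝ) := by
    apply hinj
    simp [Matrix.mulVecLin_apply, him]
  apply hα
  funext j
  have h1' := congrFun hre0 j
  have h2' := congrFun him0 j
  simp only [Pi.zero_apply] at h1' h2'
  apply Complex.ext <;> simpa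

private lemma rank_lt_of_kernel {a b : ℕ} {X : Type*} [Fintype X]
    (M : Matrix X (Fin a ⊕ Fin b) ℂ) (v : Fin a ⊕ Fin b → ℂ)
    (hv : v ≠ 0) (h0 : M.mulVec v = 0) : M.rank < a + b := by
  have h1 := LinearMap.finrank_range_add_finrank_ker M.mulVecLin
  rw [Module.finrank_pi] at h1
  have hcard : Fintype.card (Fin a ⊕ Fin b) = a + b := by simp
  rw [hcard] at h1
  have hker : LinearMap.ker M.mulVecLin ≠ ⊥ := by
    rw [Submodule.ne_bot_iff]
    exact ⟨v, by simp [LinearMap.mem_ker, Matrix.mulVecLin_apply, h0], hv⟩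
  have hkf : Module.finrank ℂ (LinearMap.ker M.mulVecLin) ≠ 0 :=
    fun h => hker (Submodule.finrank_eq_zero.mp h)
  have hrank : M.rank = Module.finrank ℂ (LinearMap.range M.mulVecLin) := rfl
  omega

end AuxLemmas2

/-- Every eigenvalue `λ` of the zero-dynamics matrix `A_z` (where `Ã X_z = X_z A_z`,
`X_z` a full-column-rank basis matrix of `V₀`, `Ã := A - B P O_L`) is an invariant zero:
with `ξ := X_z α ≠ 0` and `μ := -P O_L ξ`, one has `(A - λI) ξ + B μ = 0`,
`C ξ + D μ = 0`, and the Rosenbrock matrix at `λ` has rank `< n + m`. -/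
theorem eigenvalue_of_Az_is_invariant_zero {n m p L r : ℕ}
    (A : Matrix (Fin n) (Fin n) ℝ) (B : Matrix (Fin n) (Fin m) ℝ)
    (C : Matrix (Fin p) (Fin n) ℝ) (D : Matrix (Fin p) (Fin m) ℝ)
    (P : Matrix (Fin m) (Fin (L + 1) × Fin p) ℝ)
    (hP : P * invMat A B C D L = idZero m L)
    (Xz : Matrix (Fin n) (Fin r) ℝ) (hXzrank : Xz.rank = r)
    (hXz : ∀ ξ : Fin n → ℝ, ξ ∈ outputNulling A B C D ↔ ∃ w : Fin r → ℝ, Xz.mulVec w = ξ)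
    (Az : Matrix (Fin r) (Fin r) ℝ)
    (hAz : (A - B * P * obsMat A C L) * Xz = Xz * Az) :
    ∀ (lam : ℂ) (α : Fin r → ℂ), α ≠ 0 → (Az.map Complex.ofReal).mulVec α = lam • α →
      (Xz.map Complex.ofReal).mulVec α ≠ 0 ∧
      (A.map Complex.ofReal - lam • 1).mulVec ((Xz.map Complex.ofReal).mulVec α) +
        (B.map Complex.ofReal).mulVec
          (-((P * obsMat A C L).map Complex.ofReal).mulVec
            ((Xz.map Complex.ofReal).mulVec α)) = 0 ∧
      (C.map Complex.ofReal).mulVec ((Xz.map Complex.ofReal).mulVec α) +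
        (D.map Complex.ofReal).mulVec
          (-((P * obsMat A C L).map Complex.ofReal).mulVec
            ((Xz.map Complex.ofReal).mulVec α)) = 0 ∧
      (rosenbrock A B C D lam).rank < n + m := by
  intro lam α hα heig
  set c : ℝ → ℂ := Complex.ofReal with hc
  set Q : Matrix (Fin m) (Fin n) ℝ := P * obsMat A C L with hQ
  set ξ : Fin n → ℂ := (Xz.map Complex.ofReal).mulVec α with hξdef
  -- the real matrix identities
  have hAz' : (A - B * Q) * Xz = Xz * Az := by
    rw [hQ, ← Matrix.mul_assoc]; exact hAz
  have hCXz : C * Xz = D * (Q * Xz) := by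
    apply matExt'
    intro w
    have hmem : Xz.mulVec w ∈ outputNulling A B C D := (hXz _).mpr ⟨w, rfl⟩
    have hrel := nulling_rel A B C D P hP (Xz.mulVec w) hmem
    calc (C * Xz).mulVec w = C.mulVec (Xz.mulVec w) := (Matrix.mulVec_mulVec _ _ _).symm
      _ = D.mulVec ((P * obsMat A C L).mulVec (Xz.mulVec w)) := hrel
      _ = (D * (Q * Xz)).mulVec w := by
          rw [Matrix.mulVec_mulVec, Matrix.mulVec_mulVec, ← hQ, Matrix.mul_assoc]
  -- complexified identities
  have hAzC : (A.map c - B.map c * Q.map c) * Xz.map c = Xz.map c * Az.map c := by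
    have h := congrArg (fun M => M.map c) hAz'
    rw [mapMulC, mapSubC, mapMulC, mapMulC] at h
    exact h
  have hCXzC : C.map c * Xz.map c = D.map c * (Q.map c * Xz.map c) := by
    have h := congrArg (fun M => M.map c) hCXz
    rw [mapMulC, mapMulC, mapMulC] at h
    exact h
  -- action on the eigenvector
  have hmain : (A.map c).mulVec ξ - (B.map c).mulVec ((Q.map c).mulVec ξ) = lam • ξ := by
    have h := congrArg (fun M => M.mulVec α) hAzC
    rw [← Matrix.mulVec_mulVec, ← Matrix.mulVec_mulVec, Matrix.sub_mulVec,
      ← Matrix.mulVec_mulVec] at h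
    rw [heig, Matrix.mulVec_smul] at h
    rw [← hξdef] at h
    exact h
  have hCD : (C.map c).mulVec ξ = (D.map c).mulVec ((Q.map c).mulVec ξ) := by
    have h := congrArg (fun M => M.mulVec α) hCXzC
    rw [← Matrix.mulVec_mulVec, ← Matrix.mulVec_mulVec, ← Matrix.mulVec_mulVec] at h
    rw [← hξdef] at h
    exact h
  have goal1 : ξ ≠ 0 := mulVec_map_ne_zero Xz hXzrank α hα
  have goal2 : (A.map c - lam • 1).mulVec ξ
      + (B.map c).mulVec (-((Q.map c).mulVec ξ)) = 0 := by
    rw [Matrix.sub_mulVec, Matrix.smul_mulVec, Matrix.one_mulVec, Matrix.mulVec_neg]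
    have hA : (A.map c).mulVec ξ = lam • ξ + (B.map c).mulVec ((Q.map c).mulVec ξ) :=
      eq_add_of_sub_eq hmain
    rw [hA]
    abel
  have goal3 : (C.map c).mulVec ξ + (D.map c).mulVec (-((Q.map c).mulVec ξ)) = 0 := by
    rw [Matrix.mulVec_neg, hCD]
    abel
  refine ⟨goal1, goal2, goal3, ?_⟩
  set μ : Fin m → ℂ := -((Q.map c).mulVec ξ) with hμdef
  have hv : Sum.elim ξ μ ≠ 0 := by
    intro h
    exact goal1 (funext fun i => congrFun h (Sum.inl i))
  have hker : (rosenbrock A B C D lam).mulVec (Sum.elim ξ μ) = 0 := by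
    rw [rosenbrock, Matrix.fromBlocks_mulVec]
    have hl : Sum.elim ξ μ ∘ Sum.inl = ξ := rfl
    have hr : Sum.elim ξ μ ∘ Sum.inr = μ := rfl
    rw [hl, hr, hμdef]
    rw [goal2, goal3]
    funext x
    cases x <;> rfl
  exact rank_lt_of_kernel (rosenbrock A B C D lam) (Sum.elim ξ μ) hv hker
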